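/- Let G be an s-by-n matrix over F_2 that is a k-PIR generator matrix, and let d⊥ be a positive integer such that every nonzero vector v ∈ F_2^n with G·v = 0 has Hamming weight at least d⊥. If some column of G equals a standard unit vector e_i of F_2^s, then n ≥ 1 + (k−1)·(d⊥ − 1). -/

import Mathlib

/-- An `s × n` matrix `G` over `𝔽₂` is a `k`-PIR generator matrix if for every
index `i` there exist `k` pairwise disjoint recovery sets of column indices,
each of whose column sums equals the `i`-th standard unit vector. -/
def IsPIRMatrix (s n k : ℕ) (G : Matrix (Fin s) (Fin n) (ZMod 2)) : Prop :=
  ∀ i : Fin s, ∃ R : Fin k → Finset (Fin n),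
    (∀ j j' : Fin k, j ≠ j' → Disjoint (R j) (R j')) ∧
    ∀ j : Fin k, (∑ h ∈ R j, fun r : Fin s => G r h) = Pi.single i 1

/-- `PIRlen s k` is the smallest positive `n` for which an `s × n` `k`-PIR
generator matrix over `𝔽₂` exists. -/
noncomputable def PIRlen (s k : ℕ) : ℕ :=
  sInf {n : ℕ | 0 < n ∧ ∃ G : Matrix (Fin s) (Fin n) (ZMod 2), IsPIRMatrix s n k G}

theorem test : True := trivial

/-- If a `k`-PIR generator matrix contains a standard unit vector as a column,
then `n ≥ 1 + (k-1)(d⊥ - 1)`. -/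
theorem stmt_8 (s n k : ℕ)
    (G : Matrix (Fin s) (Fin n) (ZMod 2)) (hG : IsPIRMatrix s n k G)
    (dperp : ℕ) (hd : 0 < dperp)
    (hdual : ∀ v : Fin n → ZMod 2, v ≠ 0 → G.mulVec v = 0 →
      dperp ≤ (Finset.univ.filter fun j : Fin n => v j ≠ 0).card)
    (hunit : ∃ i : Fin s, ∃ j : Fin n,
      (fun r : Fin s => G r j) = Pi.single i 1) :
    1 + (k - 1) * (dperp - 1) ≤ n := by
  obtain ⟨i, j0, hcol⟩ := hunit
  obtain ⟨R, hdisj, hsum⟩ := hG i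
  -- sets avoiding j0
  set S : Finset (Fin k) := Finset.univ.filter (fun j => j0 ∉ R j) with hS
  set B : Finset (Fin k) := Finset.univ.filter (fun j => j0 ∈ R j) with hB
  have hBcard : B.card ≤ 1 := by
    apply Finset.card_le_one.2
    intro a ha b hb
    by_contra hab
    have := hdisj a b hab
    rw [Finset.disjoint_left] at this
    simp only [hB, Finset.mem_filter] at ha hb
    exact this ha.2 hb.2
  have hScard : k - 1 ≤ S.card := by
    have h := Finset.card_filter_add_card_filter_not
      (s := (Finset.univ : Finset (Fin k))) (p := fun j => j0 ∈ R j)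
    rw [Finset.card_univ, Fintype.card_fin] at h
    have hSe : (Finset.filter (fun a => j0 ∉ R a) Finset.univ).card = S.card := rfl
    have hBe : (Finset.filter (fun a => j0 ∈ R a) Finset.univ).card = B.card := rfl
    omega
  -- each set in S has size ≥ dperp - 1
  have hsize : ∀ j ∈ S, dperp - 1 ≤ (R j).card := by
    intro j hj
    have hj0 : j0 ∉ R j := (Finset.mem_filter.1 hj).2
    set T : Finset (Fin n) := insert j0 (R j) with hT
    set v : Fin n → ZMod 2 := fun h => if h ∈ T then 1 else 0 with hv
    have hvne : v ≠ 0 := by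
      intro h0
      have : v j0 = 0 := congrFun h0 j0
      simp [hv, hT] at this
    have haa : ∀ x : ZMod 2, x + x = 0 := by decide
    have hmv : G.mulVec v = 0 := by
      funext r
      have : G.mulVec v r = ∑ h ∈ T, G r h := by
        simp only [Matrix.mulVec, dotProduct, hv, mul_ite, mul_one, mul_zero]
        rw [Finset.sum_ite_mem, Finset.univ_inter]
      rw [this, hT, Finset.sum_insert hj0]
      have h1 : G r j0 = Pi.single (M := fun _ : Fin s => ZMod 2) i 1 r := congrFun hcol r
      have h2 : (∑ h ∈ R j, G r h) = Pi.single (M := fun _ : Fin s => ZMod 2) i 1 r := by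
        have := congrFun (hsum j) r
        simpa [Finset.sum_apply] using this
      rw [h1, h2, haa, Pi.zero_apply]
    have hsupp : (Finset.univ.filter fun h : Fin n => v h ≠ 0) = T := by
      ext h
      simp [hv]
    have := hdual v hvne hmv
    rw [hsupp, hT, Finset.card_insert_of_notMem hj0] at this
    omega
  -- count
  have hdisjU : ∀ j ∈ S, ∀ j' ∈ S, j ≠ j' → Disjoint (R j) (R j') := by
    intro a _ b _ hab; exact hdisj a b hab
  have hj0U : j0 ∉ S.biUnion R := by
    intro h
    obtain ⟨j, hj, hj0⟩ := Finset.mem_biUnion.1 h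
    exact (Finset.mem_filter.1 hj).2 hj0
  have hcardU : S.card * (dperp - 1) ≤ (S.biUnion R).card := by
    rw [Finset.card_biUnion hdisjU]
    calc S.card * (dperp - 1) = ∑ _j ∈ S, (dperp - 1) := by
          rw [Finset.sum_const, smul_eq_mul, mul_comm]
      _ ≤ ∑ j ∈ S, (R j).card := Finset.sum_le_sum hsize
  have hle : (insert j0 (S.biUnion R)).card ≤ n := by
    have := Finset.card_le_univ (insert j0 (S.biUnion R))
    simpa using this
  rw [Finset.card_insert_of_notMem hj0U] at hle
  have : (k - 1) * (dperp - 1) ≤ S.card * (dperp - 1) :=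
    Nat.mul_le_mul_right _ hScard
  omega
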